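/- Suppose g(x) = ∑_{j=1}^{N} a_j x^{−ν_j} + O(x^{−R}) as x → ∞ with ν₁ = 0 and exponents 0 = ν₁ < ν₂ < ⋯ < ν_N < R, and let h be a function holomorphic in a neighborhood of a₁. Then h(g(x)) is defined for all sufficiently large x and admits an asymptotic expansion h(g(x)) = ∑_{j} c_j x^{−μ_j} + O(x^{−R}) as x → ∞, where the exponents μ_j run through (∑_{j=1}^{N} ν_j ℕ₀) ∩ [0, R). -/

import Mathlib

open Filter Topology Asymptotics

lemma rpow_isBigO_rpow {p q : ℝ} (h : p ≤ q) :
    (fun x : ℝ => x ^ (-q)) =O[atTop] fun x : ℝ => x ^ (-p) := by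
  apply IsBigO.of_bound 1
  filter_upwards [eventually_ge_atTop (1:ℝ)] with x hx
  rw [one_mul, Real.norm_eq_abs, Real.norm_eq_abs,
    abs_of_nonneg (Real.rpow_nonneg (by linarith) _),
    abs_of_nonneg (Real.rpow_nonneg (by linarith) _)]
  exact Real.rpow_le_rpow_of_exponent_le hx (by linarith)

-- difference of powers of two functions close to each other
lemma pow_sub_pow_isBigO {u s : ℝ → ℂ} {R : ℝ}
    (hu : Tendsto u atTop (𝓝 0)) (hs : Tendsto s atTop (𝓝 0))
    (he : (fun x => u x - s x) =O[atTop] fun x : ℝ => x ^ (-R)) (k : ℕ) :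
    (fun x => (u x) ^ k - (s x) ^ k) =O[atTop] fun x : ℝ => x ^ (-R) := by
  have hfac : ∀ x, (u x) ^ k - (s x) ^ k
      = (∑ i ∈ Finset.range k, (u x) ^ i * (s x) ^ (k - 1 - i)) * (u x - s x) := by
    intro x; rw [geom_sum₂_mul]
  have hten : Tendsto (fun x => ∑ i ∈ Finset.range k, (u x) ^ i * (s x) ^ (k - 1 - i))
      atTop (𝓝 (∑ i ∈ Finset.range k, (0:ℂ) ^ i * (0:ℂ) ^ (k - 1 - i))) := by
    apply tendsto_finset_sum
    intro i _
    exact (hu.pow i).mul (hs.pow (k - 1 - i))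
  calc (fun x => (u x) ^ k - (s x) ^ k)
      =O[atTop] fun x : ℝ => (1:ℝ) * x ^ (-R) := by
        simp only [hfac]
        exact (Filter.Tendsto.isBigO_one ℝ hten).mul he
    _ = fun x : ℝ => x ^ (-R) := by funext x; rw [one_mul]

theorem stmt19 (R : ℝ) (hR : 0 < R) (N : ℕ) (hN : 0 < N)
    (a : Fin N → ℂ) (ν : Fin N → ℝ) (hmono : StrictMono ν)
    (hν0 : ν ⟨0, hN⟩ = 0) (hνR : ∀ j, ν j < R)
    (g : ℝ → ℂ)
    (hg : (fun x : ℝ => g x - ∑ j, a j * ((x ^ (-(ν j)) : ℝ) : ℂ)) =O[atTop]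
      fun x : ℝ => x ^ (-R))
    (h : ℂ → ℂ) (hh : AnalyticAt ℂ h (a ⟨0, hN⟩)) :
    ∃ (M : ℕ) (c : Fin M → ℂ) (μ : Fin M → ℝ),
      (∀ i, (∃ m : Fin N → ℕ, μ i = ∑ j, (m j : ℝ) * ν j) ∧ 0 ≤ μ i ∧ μ i < R) ∧
      (fun x : ℝ => h (g x) - ∑ i, c i * ((x ^ (-(μ i)) : ℝ) : ℂ)) =O[atTop]
        fun x : ℝ => x ^ (-R) := by
  classical
  set i0 : Fin N := ⟨0, hN⟩ with hi0
  have hνnonneg : ∀ j, 0 ≤ ν j := by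
    intro j
    rw [← hν0]
    exact hmono.monotone (by simp [hi0, Fin.le_def])
  have hνpos : ∀ j, j ≠ i0 → 0 < ν j := by
    intro j hj
    rw [← hν0]
    apply hmono
    simp only [hi0, Fin.lt_def]
    exact Nat.pos_of_ne_zero (fun hz => hj (Fin.ext hz))
  -- ε
  set ε : ℝ := Finset.univ.inf' (Finset.univ_nonempty_iff.mpr ⟨i0⟩)
    (fun j => if j = i0 then R else ν j) with hε
  have hεpos : 0 < ε := by
    rw [hε, Finset.lt_inf'_iff]
    intro j _
    by_cases hj : j = i0 <;> simp [hj, hR, hνpos j]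
  have hεR : ε ≤ R := by
    have h1 := Finset.inf'_le (b := i0) (fun j => if j = i0 then R else ν j) (Finset.mem_univ i0)
    rw [if_pos rfl] at h1
    exact h1
  have hεν : ∀ j, j ≠ i0 → ε ≤ ν j := by
    intro j hj
    have h1 := Finset.inf'_le (b := j) (fun j => if j = i0 then R else ν j) (Finset.mem_univ j)
    rw [if_neg hj] at h1
    exact h1
  -- functions
  set b : Fin N → ℂ := fun j => if j = i0 then 0 else a j with hb
  set s : ℝ → ℂ := fun x => ∑ j, b j * ((x ^ (-(ν j)) : ℝ) : ℂ) with hs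
  set e : ℝ → ℂ := fun x => g x - ∑ j, a j * ((x ^ (-(ν j)) : ℝ) : ℂ) with heq
  set u : ℝ → ℂ := fun x => g x - a i0 with hu
  have hsum : ∀ x : ℝ, (∑ j, a j * ((x ^ (-(ν j)) : ℝ) : ℂ)) = a i0 + s x := by
    intro x
    have key : ∀ j : Fin N, a j * ((x ^ (-(ν j)) : ℝ) : ℂ)
        = (if j = i0 then a i0 else 0) + b j * ((x ^ (-(ν j)) : ℝ) : ℂ) := by
      intro j
      by_cases hj : j = i0
      · subst hj; simp [hb, hν0]
      · simp [hb, hj]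
    rw [Finset.sum_congr rfl (fun j _ => key j), Finset.sum_add_distrib,
      Finset.sum_ite_eq' Finset.univ i0 (fun _ => a i0)]
    simp [hs]
  have hues : ∀ x, u x = e x + s x := by
    intro x
    simp only [hu, heq]
    rw [hsum x]; ring
  -- big-O facts
  have he_O : e =O[atTop] fun x : ℝ => x ^ (-R) := hg
  have hs_O : s =O[atTop] fun x : ℝ => x ^ (-ε) := by
    rw [hs]
    apply IsBigO.fun_sum
    intro j _
    by_cases hj : j = i0
    · simp only [hb, hj, if_pos rfl, zero_mul]
      exact isBigO_zero _ _
    · have : (fun x : ℝ => ((x ^ (-(ν j)) : ℝ) : ℂ)) =O[atTop] fun x : ℝ => x ^ (-ε) := by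
        have h1 : (fun x : ℝ => (x ^ (-(ν j)) : ℝ)) =O[atTop] fun x : ℝ => x ^ (-ε) :=
          rpow_isBigO_rpow (hεν j hj)
        exact (Complex.isBigO_ofReal_left.mpr h1)
      exact this.const_mul_left _
  have hu_O : u =O[atTop] fun x : ℝ => x ^ (-ε) := by
    have : (fun x => e x + s x) =O[atTop] fun x : ℝ => x ^ (-ε) :=
      (he_O.trans (rpow_isBigO_rpow hεR)).add hs_O
    exact this.congr' (by filter_upwards with x using (hues x).symm) (by rfl)
  have hrpow0 : Tendsto (fun x : ℝ => x ^ (-ε)) atTop (𝓝 0) :=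
    tendsto_rpow_neg_atTop hεpos
  have hu0 : Tendsto u atTop (𝓝 0) := hu_O.trans_tendsto hrpow0
  have hs0 : Tendsto s atTop (𝓝 0) := hs_O.trans_tendsto hrpow0
  -- power series
  obtain ⟨p, hp⟩ := hh
  set K : ℕ := ⌈R / ε⌉₊ with hK
  have hKε : R ≤ K * ε := by
    rw [← div_le_iff₀ hεpos] at *
    calc R / ε ≤ (⌈R / ε⌉₊ : ℝ) := Nat.le_ceil _
    _ = K := by rw [hK]
  -- Taylor approximation
  have htaylor : (fun x : ℝ => h (g x) - p.partialSum K (u x)) =O[atTop]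
      fun x : ℝ => ‖u x‖ ^ K := by
    have := (hp.isBigO_sub_partialSum_pow K).comp_tendsto hu0
    apply this.congr'
    · filter_upwards with x
      simp [Function.comp, hu]
    · filter_upwards with x; rfl
  have hnormu : (fun x : ℝ => ‖u x‖ ^ K) =O[atTop] fun x : ℝ => x ^ (-R) := by
    have h1 : (fun x : ℝ => ‖u x‖ ^ K) =O[atTop] fun x : ℝ => (x ^ (-ε)) ^ K :=
      (hu_O.norm_left.pow K)
    apply h1.trans
    have h2 : (fun x : ℝ => (x ^ (-ε)) ^ K) =ᶠ[atTop] fun x : ℝ => x ^ (-(ε * K)) := by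
      filter_upwards [eventually_ge_atTop (0:ℝ)] with x hx
      rw [← Real.rpow_natCast (x ^ (-ε)) K, ← Real.rpow_mul hx]
      ring_nf
    exact h2.isBigO.trans (rpow_isBigO_rpow (by nlinarith))
  -- partial sum as polynomial in u
  have hps : ∀ z : ℂ, p.partialSum K z = ∑ k ∈ Finset.range K, p.coeff k * z ^ k := by
    intro z
    rw [FormalMultilinearSeries.partialSum]
    apply Finset.sum_congr rfl
    intro k _
    rw [p.apply_eq_pow_smul_coeff, smul_eq_mul, mul_comm]
  set P : ℝ → ℂ := fun x => ∑ k ∈ Finset.range K, p.coeff k * (u x) ^ k with hP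
  set Q : ℝ → ℂ := fun x => ∑ k ∈ Finset.range K, p.coeff k * (s x) ^ k with hQ
  have hPQ : (fun x => P x - Q x) =O[atTop] fun x : ℝ => x ^ (-R) := by
    have : ∀ x, P x - Q x = ∑ k ∈ Finset.range K, p.coeff k * ((u x) ^ k - (s x) ^ k) := by
      intro x; rw [hP, hQ, ← Finset.sum_sub_distrib]
      apply Finset.sum_congr rfl; intro k _; ring
    simp only [this]
    apply IsBigO.fun_sum
    intro k _
    have he' : (fun x => u x - s x) =O[atTop] fun x : ℝ => x ^ (-R) := by
      apply he_O.congr' _ (by rfl)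
      filter_upwards with x
      rw [hues x]; ring_nf
    exact ((pow_sub_pow_isBigO hu0 hs0 he' k).const_mul_left _)
  -- expansion of Q
  set ι := (k : Fin K) × (Fin (k : ℕ) → Fin N) with hι
  set μ₀ : ι → ℝ := fun q => ∑ i, ν (q.2 i) with hμ₀
  set C : ι → ℂ := fun q => p.coeff q.1 * ∏ i, b (q.2 i) with hC
  have hQexp : ∀ x : ℝ, 0 < x → Q x = ∑ q : ι, C q * ((x ^ (-(μ₀ q)) : ℝ) : ℂ) := by
    intro x hx
    show (∑ k ∈ Finset.range K, p.coeff k * (s x) ^ k) = _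
    rw [← Finset.univ_sigma_univ, Finset.sum_sigma]
    rw [← Fin.sum_univ_eq_sum_range (fun k => p.coeff k * (s x) ^ k) K]
    apply Finset.sum_congr rfl
    intro k _
    show p.coeff ↑k * (∑ j, b j * ((x ^ (-(ν j)) : ℝ) : ℂ)) ^ (k : ℕ)
      = ∑ f : Fin (k : ℕ) → Fin N, C ⟨k, f⟩ * ((x ^ (-(μ₀ ⟨k, f⟩)) : ℝ) : ℂ)
    rw [Fintype.sum_pow, Finset.mul_sum]
    apply Finset.sum_congr rfl
    intro f _
    show p.coeff ↑k * ∏ i, (b (f i) * ((x ^ (-(ν (f i))) : ℝ) : ℂ))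
      = (p.coeff ↑k * ∏ i, b (f i)) * ((x ^ (-(∑ i, ν (f i))) : ℝ) : ℂ)
    rw [Finset.prod_mul_distrib, ← Complex.ofReal_prod,
      ← Real.rpow_sum_of_pos hx (fun i => -(ν (f i))) Finset.univ,
      ← Finset.sum_neg_distrib]
    ring
  -- split small / large exponents
  set c' : ι → ℂ := fun q => if μ₀ q < R then C q else 0 with hc'
  set μ' : ι → ℝ := fun q => if μ₀ q < R then μ₀ q else 0 with hμ'
  have hsplit : (fun x : ℝ => Q x - ∑ q : ι, c' q * ((x ^ (-(μ' q)) : ℝ) : ℂ))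
      =O[atTop] fun x : ℝ => x ^ (-R) := by
    have heq' : (fun x : ℝ => Q x - ∑ q : ι, c' q * ((x ^ (-(μ' q)) : ℝ) : ℂ))
        =ᶠ[atTop] fun x : ℝ =>
          ∑ q : ι, (C q * ((x ^ (-(μ₀ q)) : ℝ) : ℂ) - c' q * ((x ^ (-(μ' q)) : ℝ) : ℂ)) := by
      filter_upwards [eventually_gt_atTop (0:ℝ)] with x hx
      rw [hQexp x hx, ← Finset.sum_sub_distrib]
    apply IsBigO.congr' _ heq'.symm (by rfl)
    apply IsBigO.fun_sum
    intro q _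
    by_cases hq : μ₀ q < R
    · simp only [hc', hμ', if_pos hq, sub_self]
      exact isBigO_zero _ _
    · simp only [hc', hμ', if_neg hq, zero_mul, sub_zero]
      have : (fun x : ℝ => ((x ^ (-(μ₀ q)) : ℝ) : ℂ)) =O[atTop] fun x : ℝ => x ^ (-R) :=
        Complex.isBigO_ofReal_left.mpr (rpow_isBigO_rpow (le_of_not_gt hq))
      exact this.const_mul_left _
  -- assemble
  set M := Fintype.card ι with hM
  set eqv : Fin M ≃ ι := (Fintype.equivFin ι).symm with heqv
  refine ⟨M, fun i => c' (eqv i), fun i => μ' (eqv i), ?_, ?_⟩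
  · intro i
    by_cases hq : μ₀ (eqv i) < R
    · refine ⟨⟨fun j => (Finset.univ.filter (fun i' => (eqv i).2 i' = j)).card, ?_⟩, ?_, ?_⟩
      · show (if μ₀ (eqv i) < R then μ₀ (eqv i) else 0) = _
        rw [if_pos hq]
        show (∑ i', ν ((eqv i).2 i')) = _
        rw [← Finset.sum_fiberwise Finset.univ (eqv i).2 (fun i' => ν ((eqv i).2 i'))]
        apply Finset.sum_congr rfl
        intro j _
        have hinner : ∑ i' ∈ Finset.univ.filter (fun i' => (eqv i).2 i' = j), ν ((eqv i).2 i')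
            = ∑ _i' ∈ Finset.univ.filter (fun i' => (eqv i).2 i' = j), ν j :=
          Finset.sum_congr rfl (fun i' hi' => by rw [(Finset.mem_filter.mp hi').2])
        rw [hinner, Finset.sum_const, nsmul_eq_mul]
      · show 0 ≤ (if μ₀ (eqv i) < R then μ₀ (eqv i) else 0)
        rw [if_pos hq]
        exact Finset.sum_nonneg (fun i' _ => hνnonneg _)
      · show (if μ₀ (eqv i) < R then μ₀ (eqv i) else 0) < R
        rw [if_pos hq]; exact hq
    · refine ⟨⟨fun _ => 0, ?_⟩, ?_, ?_⟩
      · show (if μ₀ (eqv i) < R then μ₀ (eqv i) else 0) = _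
        rw [if_neg hq]; simp
      · show 0 ≤ (if μ₀ (eqv i) < R then μ₀ (eqv i) else 0)
        rw [if_neg hq]
      · show (if μ₀ (eqv i) < R then μ₀ (eqv i) else 0) < R
        rw [if_neg hq]; exact hR
  · have hsumeq : ∀ x : ℝ, (∑ i : Fin M, c' (eqv i) * ((x ^ (-(μ' (eqv i))) : ℝ) : ℂ))
        = ∑ q : ι, c' q * ((x ^ (-(μ' q)) : ℝ) : ℂ) :=
      fun x => Equiv.sum_comp eqv (fun q => c' q * ((x ^ (-(μ' q)) : ℝ) : ℂ))
    have : (fun x : ℝ => h (g x) - ∑ i : Fin M, c' (eqv i) * ((x ^ (-(μ' (eqv i))) : ℝ) : ℂ))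
        = fun x : ℝ => (h (g x) - P x) + (P x - Q x)
            + (Q x - ∑ q : ι, c' q * ((x ^ (-(μ' q)) : ℝ) : ℂ)) := by
      funext x; rw [hsumeq x]; ring
    rw [this]
    have hhP : (fun x : ℝ => h (g x) - P x) =O[atTop] fun x : ℝ => x ^ (-R) := by
      have : (fun x : ℝ => h (g x) - P x) = fun x : ℝ => h (g x) - p.partialSum K (u x) := by
        funext x; rw [hP, hps (u x)]
      rw [this]
      exact htaylor.trans hnormu
    exact (hhP.add hPQ).add hsplit
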